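/- The Fermat quartic surface in ℙ³(ℂ) defined by x₀⁴ + x₁⁴ + x₂⁴ + x₃⁴ = 0 is smooth and contains exactly 48 lines. -/

import Mathlib

open MvPolynomial

/-- The set of lines (2-dimensional linear subspaces of ℂ⁴) contained in the quartic `{F = 0}`. -/
def linesOn (F : MvPolynomial (Fin 4) ℂ) : Set (Submodule ℂ (Fin 4 → ℂ)) :=
  {W | Module.finrank ℂ ↥W = 2 ∧ ∀ v ∈ W, eval v F = 0}

/-- The quartic surface `{F = 0}` is smooth: `F` and its partial derivatives have no common
zero in ℂ⁴ ∖ {0}. -/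
def IsSmoothQuartic (F : MvPolynomial (Fin 4) ℂ) : Prop :=
  ∀ v : Fin 4 → ℂ, v ≠ 0 → ¬ (eval v F = 0 ∧ ∀ i : Fin 4, eval v (pderiv i F) = 0)

/-- The defining polynomial of the Fermat quartic `X₄₈`. -/
noncomputable def FFermat : MvPolynomial (Fin 4) ℂ :=
  X 0 ^ 4 + X 1 ^ 4 + X 2 ^ 4 + X 3 ^ 4

open Submodule Polynomial in
section
-- roots
noncomputable def R4 : Finset ℂ := (Polynomial.nthRoots 4 (-1 : ℂ)).toFinset

lemma mem_R4 {z : ℂ} : z ∈ R4 ↔ z ^ 4 = -1 := by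
  simp [R4, Polynomial.mem_nthRoots (by norm_num : 0 < 4)]

lemma card_R4 : R4.card = 4 := by
  have hζ : IsPrimitiveRoot (Complex.exp (2 * Real.pi * Complex.I / 4)) 4 :=
    Complex.isPrimitiveRoot_exp 4 (by norm_num)
  have hnd := hζ.nthRoots_nodup (a := (-1 : ℂ)) (by norm_num)
  have hcard := hζ.card_nthRoots (-1 : ℂ)
  rw [if_pos] at hcard
  · rw [R4, Multiset.toFinset_card_of_nodup hnd, hcard]
  · exact ⟨Complex.exp (Real.pi * Complex.I / 4), by
      rw [← Complex.exp_nat_mul]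
      rw [show (4:ℕ) * (Real.pi * Complex.I / 4) = Real.pi * Complex.I by push_cast; ring,
        Complex.exp_pi_mul_I]⟩

lemma root_ne_zero {z : ℂ} (h : z ^ 4 = -1) : z ≠ 0 := by
  intro h0; rw [h0] at h; norm_num at h

lemma root_inv {z : ℂ} (h : z ^ 4 = -1) : (z⁻¹) ^ 4 = -1 := by
  rw [inv_pow, h]; norm_num

end

section
open Submodule

def v2 (i j : Fin 4) (α : ℂ) : Fin 4 → ℂ := fun m => if m = i then 1 else if m = j then α else 0

noncomputable def stdLine (i j k l : Fin 4) (α β : ℂ) : Submodule ℂ (Fin 4 → ℂ) :=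
  Submodule.span ℂ {v2 i j α, v2 k l β}

noncomputable def lineOf : Fin 3 → ℂ → ℂ → Submodule ℂ (Fin 4 → ℂ)
  | 0, α, β => stdLine 0 1 2 3 α β
  | 1, α, β => stdLine 0 2 1 3 α β
  | 2, α, β => stdLine 0 3 1 2 α β

lemma eval_FFermat (v : Fin 4 → ℂ) :
    eval v FFermat = v 0 ^ 4 + v 1 ^ 4 + v 2 ^ 4 + v 3 ^ 4 := by
  simp [FFermat]

-- span pair rewriting lemmas
lemma span_pair_smul_left {u w : Fin 4 → ℂ} {c : ℂ} (hc : c ≠ 0) :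
    Submodule.span ℂ {c • u, w} = Submodule.span ℂ {u, w} := by
  apply le_antisymm <;> rw [Submodule.span_le]
  · rintro x hx
    rcases hx with rfl | rfl
    · exact smul_mem _ c (subset_span (by left; rfl))
    · exact subset_span (by right; rfl)
  · rintro x hx
    rcases hx with rfl | rfl
    · have hh := smul_mem (Submodule.span ℂ {c • x, w}) c⁻¹ (subset_span (by left; rfl))
      rwa [smul_smul, inv_mul_cancel₀ hc, one_smul] at hh
    · exact subset_span (by right; rfl)

lemma v2_smul {i j : Fin 4} (hij : i ≠ j) {α : ℂ} (hα : α ≠ 0) :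
    v2 j i α = α • v2 i j α⁻¹ := by
  funext m
  by_cases h1 : m = i <;> by_cases h2 : m = j <;>
    simp_all [v2, Pi.smul_apply, smul_eq_mul, mul_inv_cancel₀ hα]

lemma stdLine_comm (i j k l : Fin 4) (α β : ℂ) :
    stdLine i j k l α β = stdLine k l i j β α := by
  unfold stdLine; rw [Set.pair_comm]

lemma stdLine_swap₁ {i j : Fin 4} (hij : i ≠ j) (k l : Fin 4) {α : ℂ} (hα : α ≠ 0) (β : ℂ) :
    stdLine j i k l α β = stdLine i j k l α⁻¹ β := by
  unfold stdLine
  rw [v2_smul hij hα, span_pair_smul_left hα]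

lemma stdLine_swap₂ (i j : Fin 4) {k l : Fin 4} (hkl : k ≠ l) (α : ℂ) {β : ℂ} (hβ : β ≠ 0) :
    stdLine i j l k α β = stdLine i j k l α β⁻¹ := by
  rw [stdLine_comm i j l k, stdLine_swap₁ hkl i j hβ α, stdLine_comm]

end

section
open Submodule

lemma smooth_Fermat : IsSmoothQuartic FFermat := by
  intro v hv ⟨h0, hd⟩
  apply hv
  funext i
  have h := hd i
  fin_cases i <;> · simp [FFermat] at h; exact h

lemma finrank_span_pair' {u w : Fin 4 → ℂ} (h : LinearIndependent ℂ ![u, w]) :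
    Module.finrank ℂ ↥(Submodule.span ℂ {u, w}) = 2 := by
  have := finrank_span_eq_card h
  rw [show Set.range ![u, w] = {u, w} by simp [Set.pair_comm]] at this
  simpa using this

lemma lineOf_mem {p : Fin 3} {α β : ℂ} (hα : α ^ 4 = -1) (hβ : β ^ 4 = -1) :
    lineOf p α β ∈ linesOn FFermat := by
  fin_cases p <;>
  · constructor
    · apply finrank_span_pair'
      rw [LinearIndependent.pair_iff]
      intro s t hst
      constructor
      · have h0 := congrFun hst 0
        simpa [v2] using h0
      · first
        | (have h2 := congrFun hst 2; simpa [v2] using h2)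
        | (have h1 := congrFun hst 1; simpa [v2] using h1)
    · intro x hx
      obtain ⟨s, t, hst⟩ := Submodule.mem_span_pair.mp hx
      rw [← hst, eval_FFermat]
      simp [v2, Pi.add_apply, Pi.smul_apply, smul_eq_mul]
      linear_combination s ^ 4 * hα + t ^ 4 * hβ

lemma coeffs {a b : Fin 4 → ℂ}
    (h : ∀ s t : ℂ, (s * a 0 + t * b 0) ^ 4 + (s * a 1 + t * b 1) ^ 4
      + (s * a 2 + t * b 2) ^ 4 + (s * a 3 + t * b 3) ^ 4 = 0) :
    (a 0 ^ 4 + a 1 ^ 4 + a 2 ^ 4 + a 3 ^ 4 = 0) ∧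
    (a 0 ^ 3 * b 0 + a 1 ^ 3 * b 1 + a 2 ^ 3 * b 2 + a 3 ^ 3 * b 3 = 0) ∧
    (a 0 ^ 2 * b 0 ^ 2 + a 1 ^ 2 * b 1 ^ 2 + a 2 ^ 2 * b 2 ^ 2 + a 3 ^ 2 * b 3 ^ 2 = 0) ∧
    (a 0 * b 0 ^ 3 + a 1 * b 1 ^ 3 + a 2 * b 2 ^ 3 + a 3 * b 3 ^ 3 = 0) ∧
    (b 0 ^ 4 + b 1 ^ 4 + b 2 ^ 4 + b 3 ^ 4 = 0) := by
  have e0 := h 1 0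
  have e5 := h 0 1
  have e1 := h 1 1
  have e2 := h 1 (-1)
  have e3 := h 2 1
  refine ⟨?_, ?_, ?_, ?_, ?_⟩
  · linear_combination e0
  · linear_combination (-(1:ℂ)/2) * e0 - (1/8 : ℂ) * e1 - (1/24 : ℂ) * e2 + (1/24 : ℂ) * e3 + (1/8 : ℂ) * e5
  · linear_combination (-(1:ℂ)/6) * e0 + (1/12 : ℂ) * e1 + (1/12 : ℂ) * e2 - (1/6 : ℂ) * e5
  · linear_combination ((1:ℂ)/2) * e0 + (1/4 : ℂ) * e1 - (1/12 : ℂ) * e2 - (1/24 : ℂ) * e3 - (1/8 : ℂ) * e5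
  · linear_combination e5

lemma KEY {c d e f : ℂ} (h0 : 1 + c ^ 4 + e ^ 4 = 0) (h1 : c ^ 3 * d + e ^ 3 * f = 0)
    (h2 : c ^ 2 * d ^ 2 + e ^ 2 * f ^ 2 = 0) (h3 : c * d ^ 3 + e * f ^ 3 = 0)
    (h4 : 1 + d ^ 4 + f ^ 4 = 0) :
    (c = 0 ∧ f = 0 ∧ d ^ 4 = -1 ∧ e ^ 4 = -1) ∨ (d = 0 ∧ e = 0 ∧ c ^ 4 = -1 ∧ f ^ 4 = -1) := by
  by_cases hc : c = 0
  · left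
    subst hc
    have he : e ^ 4 = -1 := by linear_combination h0
    have he0 : e ≠ 0 := root_ne_zero he
    have h' : e ^ 3 * f = 0 := by linear_combination h1
    have hf : f = 0 := by
      rcases mul_eq_zero.mp h' with h | h
      · exact absurd (pow_eq_zero_iff (by norm_num) |>.mp h) he0
      · exact h
    subst hf
    exact ⟨rfl, rfl, by linear_combination h4, he⟩
  · right
    have hd : d = 0 := by
      by_contra hd
      have key : c ^ 2 * d ^ 2 * (c ^ 4 + e ^ 4) = 0 := by
        linear_combination (c ^ 3 * d - e ^ 3 * f) * h1 + e ^ 4 * h2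
      have h5 : c ^ 4 + e ^ 4 = 0 := by
        rcases mul_eq_zero.mp key with h | h
        · rcases mul_eq_zero.mp h with h' | h'
          · exact absurd (pow_eq_zero_iff (by norm_num) |>.mp h') hc
          · exact absurd (pow_eq_zero_iff (by norm_num) |>.mp h') hd
        · exact h
      have : (1 : ℂ) = 0 := by linear_combination h0 - h5
      norm_num at this
    subst hd
    have hf : f ^ 4 = -1 := by linear_combination h4
    have hf0 : f ≠ 0 := root_ne_zero hf
    have h' : e * f ^ 3 = 0 := by linear_combination h3
    have he : e = 0 := by
      rcases mul_eq_zero.mp h' with h | h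
      · exact h
      · exact absurd (pow_eq_zero_iff (by norm_num) |>.mp h) hf0
    subst he
    exact ⟨rfl, rfl, by linear_combination h0, hf⟩

end
section
open Submodule

lemma fin4_cases (i : Fin 4) : i = 0 ∨ i = 1 ∨ i = 2 ∨ i = 3 := by
  fin_cases i <;> simp

lemma sum4 {i j k l : Fin 4}
    (huniv : ∀ m : Fin 4, m = i ∨ m = j ∨ m = k ∨ m = l)
    (hij : i ≠ j) (hik : i ≠ k) (hil : i ≠ l) (hjk : j ≠ k) (hjl : j ≠ l) (hkl : k ≠ l)
    (g : Fin 4 → ℂ) : g 0 + g 1 + g 2 + g 3 = g i + g j + g k + g l := by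
  have huniv' : (Finset.univ : Finset (Fin 4)) = {i, j, k, l} := by
    ext m
    simpa using huniv m
  calc g 0 + g 1 + g 2 + g 3 = ∑ m, g m := (Fin.sum_univ_four g).symm
    _ = ∑ m ∈ ({i, j, k, l} : Finset (Fin 4)), g m := by rw [huniv']
    _ = g i + g j + g k + g l := by
        rw [Finset.sum_insert (by simp [hij, hik, hil]),
          Finset.sum_insert (by simp [hjk, hjl]),
          Finset.sum_insert (by simp [hkl]), Finset.sum_singleton]
        ring

lemma classify_aux {W : Submodule ℂ (Fin 4 → ℂ)} {a b : Fin 4 → ℂ} {i j k l : Fin 4}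
    (huniv : ∀ m : Fin 4, m = i ∨ m = j ∨ m = k ∨ m = l)
    (hij : i ≠ j) (hik : i ≠ k) (hil : i ≠ l) (hjk : j ≠ k) (hjl : j ≠ l) (hkl : k ≠ l)
    (hW : W = Submodule.span ℂ {a, b})
    (hai : a i = 1) (haj : a j = 0) (hbi : b i = 0) (hbj : b j = 1)
    (hvan : ∀ v ∈ W, eval v FFermat = 0) :
    (∃ α β, α ^ 4 = -1 ∧ β ^ 4 = -1 ∧ W = stdLine i k j l α β) ∨
    (∃ α β, α ^ 4 = -1 ∧ β ^ 4 = -1 ∧ W = stdLine i l j k α β) := by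
  have hmem : ∀ s t : ℂ, s • a + t • b ∈ W := by
    intro s t
    rw [hW]
    exact add_mem (smul_mem _ _ (subset_span (Or.inl rfl)))
      (smul_mem _ _ (subset_span (Or.inr rfl)))
  have h : ∀ s t : ℂ, (s * a 0 + t * b 0) ^ 4 + (s * a 1 + t * b 1) ^ 4
      + (s * a 2 + t * b 2) ^ 4 + (s * a 3 + t * b 3) ^ 4 = 0 := by
    intro s t
    have h' := hvan _ (hmem s t)
    rw [eval_FFermat] at h'
    simpa [Pi.add_apply, Pi.smul_apply, smul_eq_mul] using h'
  obtain ⟨C0, C1, C2, C3, C4⟩ := coeffs h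
  have h0 : 1 + a k ^ 4 + a l ^ 4 = 0 := by
    have e := sum4 huniv hij hik hil hjk hjl hkl (fun m => a m ^ 4)
    rw [hai, haj] at e
    linear_combination C0 - e
  have h1 : a k ^ 3 * b k + a l ^ 3 * b l = 0 := by
    have e := sum4 huniv hij hik hil hjk hjl hkl (fun m => a m ^ 3 * b m)
    rw [hai, haj, hbi, hbj] at e
    linear_combination C1 - e
  have h2 : a k ^ 2 * b k ^ 2 + a l ^ 2 * b l ^ 2 = 0 := by
    have e := sum4 huniv hij hik hil hjk hjl hkl (fun m => a m ^ 2 * b m ^ 2)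
    rw [hai, haj, hbi, hbj] at e
    linear_combination C2 - e
  have h3 : a k * b k ^ 3 + a l * b l ^ 3 = 0 := by
    have e := sum4 huniv hij hik hil hjk hjl hkl (fun m => a m * b m ^ 3)
    rw [hai, haj, hbi, hbj] at e
    linear_combination C3 - e
  have h4 : 1 + b k ^ 4 + b l ^ 4 = 0 := by
    have e := sum4 huniv hij hik hil hjk hjl hkl (fun m => b m ^ 4)
    rw [hbi, hbj] at e
    linear_combination C4 - e
  rcases KEY h0 h1 h2 h3 h4 with ⟨hc, hf, hd4, he4⟩ | ⟨hd, he, hc4, hf4⟩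
  · -- a k = 0, b l = 0 : W = stdLine i l j k (a l) (b k)
    right
    obtain ⟨γ, hγ⟩ : ∃ γ, a l = γ := ⟨_, rfl⟩
    obtain ⟨δ, hδ⟩ : ∃ δ, b k = δ := ⟨_, rfl⟩
    rw [hγ] at he4
    rw [hδ] at hd4
    refine ⟨γ, δ, he4, hd4, ?_⟩
    have ha' : a = v2 i l γ := by
      funext m
      rcases huniv m with rfl | rfl | rfl | rfl <;>
        simp [v2, hai, haj, hc, hγ, Ne.symm hij, Ne.symm hik, Ne.symm hil, hjk, hjl, hkl,
          Ne.symm hjk, Ne.symm hjl, Ne.symm hkl, hij, hik, hil]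
    have hb' : b = v2 j k δ := by
      funext m
      rcases huniv m with rfl | rfl | rfl | rfl <;>
        simp [v2, hbi, hbj, hf, hδ, Ne.symm hij, Ne.symm hik, Ne.symm hil, hjk, hjl, hkl,
          Ne.symm hjk, Ne.symm hjl, Ne.symm hkl, hij, hik, hil]
    rw [hW, ha', hb']
    rfl
  · -- b k = 0, a l = 0 : W = stdLine i k j l (a k) (b l)
    left
    obtain ⟨γ, hγ⟩ : ∃ γ, a k = γ := ⟨_, rfl⟩
    obtain ⟨δ, hδ⟩ : ∃ δ, b l = δ := ⟨_, rfl⟩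
    rw [hγ] at hc4
    rw [hδ] at hf4
    refine ⟨γ, δ, hc4, hf4, ?_⟩
    have ha' : a = v2 i k γ := by
      funext m
      rcases huniv m with rfl | rfl | rfl | rfl <;>
        simp [v2, hai, haj, he, hγ, Ne.symm hij, Ne.symm hik, Ne.symm hil, hjk, hjl, hkl,
          Ne.symm hjk, Ne.symm hjl, Ne.symm hkl, hij, hik, hil]
    have hb' : b = v2 j l δ := by
      funext m
      rcases huniv m with rfl | rfl | rfl | rfl <;>
        simp [v2, hbi, hbj, hd, hδ, Ne.symm hij, Ne.symm hik, Ne.symm hil, hjk, hjl, hkl,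
          Ne.symm hjk, Ne.symm hjl, Ne.symm hkl, hij, hik, hil]
    rw [hW, ha', hb']
    rfl

end
section
open Submodule

lemma lineOf_0 (α β : ℂ) : lineOf 0 α β = stdLine 0 1 2 3 α β := rfl
lemma lineOf_1 (α β : ℂ) : lineOf 1 α β = stdLine 0 2 1 3 α β := rfl
lemma lineOf_2 (α β : ℂ) : lineOf 2 α β = stdLine 0 3 1 2 α β := rfl

lemma range_fin2 {X : Type*} (f : Fin 2 → X) : Set.range f = {f 0, f 1} := by
  ext x
  simp only [Set.mem_range, Set.mem_insert_iff, Set.mem_singleton_iff]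
  constructor
  · rintro ⟨i, rfl⟩
    fin_cases i
    · exact Or.inl rfl
    · exact Or.inr rfl
  · rintro (rfl | rfl)
    exacts [⟨0, rfl⟩, ⟨1, rfl⟩]

lemma exists_basis {W : Submodule ℂ (Fin 4 → ℂ)} (hW : Module.finrank ℂ ↥W = 2) :
    ∃ a b : Fin 4 → ℂ, W = Submodule.span ℂ {a, b} ∧ LinearIndependent ℂ ![a, b] := by
  let B := Module.finBasisOfFinrankEq ℂ W hW
  have hli := B.linearIndependent.map' W.subtype (Submodule.ker_subtype W)
  refine ⟨B 0, B 1, ?_, ?_⟩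
  · have hsp := B.span_eq
    have h2 := congrArg (Submodule.map W.subtype) hsp
    rw [Submodule.map_span, Submodule.map_top, Submodule.range_subtype] at h2
    have h3 : ⇑W.subtype '' Set.range ⇑B = {(B 0 : Fin 4 → ℂ), (B 1 : Fin 4 → ℂ)} := by
      rw [← Set.range_comp, range_fin2]
      rfl
    rw [h3] at h2
    exact h2.symm
  · have : ![((B 0 : Fin 4 → ℂ)), (B 1 : Fin 4 → ℂ)] = ⇑W.subtype ∘ ⇑B := by
      funext m
      fin_cases m <;> rfl
    rw [this]
    exact hli

lemma exists_minor {a b : Fin 4 → ℂ} (h : LinearIndependent ℂ ![a, b]) :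
    ∃ i j : Fin 4, a i * b j - a j * b i ≠ 0 := by
  by_contra hcon
  push_neg at hcon
  have hpair := LinearIndependent.pair_iff.mp h
  have ha : a ≠ 0 := by
    rintro rfl
    have := (hpair 1 0 (by simp)).1
    norm_num at this
  obtain ⟨i, hi⟩ : ∃ i, a i ≠ 0 := by
    by_contra h'
    push_neg at h'
    exact ha (funext fun m => h' m)
  have hb : b = (b i / a i) • a := by
    funext m
    simp only [Pi.smul_apply, smul_eq_mul]
    rw [div_mul_eq_mul_div, eq_div_iff hi]
    linear_combination -hcon m i
  have h2 : (-(b i / a i)) • a + (1 : ℂ) • b = 0 := by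
    rw [hb]
    funext m
    simp only [Pi.add_apply, Pi.smul_apply, Pi.zero_apply, smul_eq_mul]
    field_simp
    ring
  have := (hpair _ _ h2).2
  norm_num at this

lemma classify {W : Submodule ℂ (Fin 4 → ℂ)} (hW : W ∈ linesOn FFermat) :
    ∃ (p : Fin 3) (α β : ℂ), α ^ 4 = -1 ∧ β ^ 4 = -1 ∧ W = lineOf p α β := by
  obtain ⟨hrank, hvan⟩ := hW
  obtain ⟨a, b, hspan, hli⟩ := exists_basis hrank
  obtain ⟨i, j, hminor⟩ := exists_minor hli
  have hij : i ≠ j := by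
    rintro rfl
    exact hminor (by ring)
  -- normalized basis
  obtain ⟨d, hd⟩ : ∃ d, a i * b j - a j * b i = d := ⟨_, rfl⟩
  have hd0 : d ≠ 0 := hd ▸ hminor
  obtain ⟨a', ha'⟩ : ∃ a', d⁻¹ • ((b j) • a - (a j) • b) = a' := ⟨_, rfl⟩
  obtain ⟨b', hb'⟩ : ∃ b', d⁻¹ • ((a i) • b - (b i) • a) = b' := ⟨_, rfl⟩
  have hmemW : ∀ x ∈ Submodule.span ℂ {a, b}, x ∈ W := by rw [← hspan]; exact fun x h => h
  have haW : a ∈ Submodule.span ℂ {a, b} := subset_span (Or.inl rfl)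
  have hbW : b ∈ Submodule.span ℂ {a, b} := subset_span (Or.inr rfl)
  have haU : a ∈ Submodule.span ℂ {a', b'} := by
    rw [Submodule.mem_span_pair]
    refine ⟨a i, a j, ?_⟩
    rw [← ha', ← hb']
    funext m
    simp only [Pi.add_apply, Pi.smul_apply, Pi.sub_apply, smul_eq_mul]
    field_simp
    linear_combination (a m) * hd
  have hbU : b ∈ Submodule.span ℂ {a', b'} := by
    rw [Submodule.mem_span_pair]
    refine ⟨b i, b j, ?_⟩
    rw [← ha', ← hb']
    funext m
    simp only [Pi.add_apply, Pi.smul_apply, Pi.sub_apply, smul_eq_mul]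
    field_simp
    linear_combination (b m) * hd
  have hspan' : W = Submodule.span ℂ {a', b'} := by
    apply le_antisymm
    · rw [hspan, span_le]
      intro x hx
      rcases hx with h | h <;> rw [h]
      · exact haU
      · exact hbU
    · rw [span_le]
      intro x hx
      rcases hx with h | h <;> rw [h]
      · show a' ∈ W
        rw [hspan, ← ha']
        exact smul_mem _ _ (sub_mem (smul_mem _ _ haW) (smul_mem _ _ hbW))
      · show b' ∈ W
        rw [hspan, ← hb']
        exact smul_mem _ _ (sub_mem (smul_mem _ _ hbW) (smul_mem _ _ haW))
  have hai : a' i = 1 := by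
    rw [← ha']
    simp only [Pi.smul_apply, Pi.sub_apply, smul_eq_mul]
    field_simp
    linear_combination hd
  have haj : a' j = 0 := by
    rw [← ha']
    simp only [Pi.smul_apply, Pi.sub_apply, smul_eq_mul]
    ring
  have hbi : b' i = 0 := by
    rw [← hb']
    simp only [Pi.smul_apply, Pi.sub_apply, smul_eq_mul]
    ring
  have hbj : b' j = 1 := by
    rw [← hb']
    simp only [Pi.smul_apply, Pi.sub_apply, smul_eq_mul]
    field_simp
    linear_combination hd
  clear ha' hb' hd hminor hli hspan haU hbU haW hbW hmemW
  rcases fin4_cases i with rfl | rfl | rfl | rfl <;>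
    rcases fin4_cases j with rfl | rfl | rfl | rfl
  · exact absurd rfl hij
  · rcases classify_aux (k := 2) (l := 3) (by decide) (by decide) (by decide) (by decide)
        (by decide) (by decide) (by decide) hspan' hai haj hbi hbj hvan with
      ⟨α, β, hα, hβ, hWeq⟩ | ⟨α, β, hα, hβ, hWeq⟩
    · exact ⟨1, α, β, hα, hβ, by rw [hWeq]; rfl⟩
    · exact ⟨2, α, β, hα, hβ, by rw [hWeq]; rfl⟩
  · rcases classify_aux (k := 1) (l := 3) (by decide) (by decide) (by decide) (by decide)
        (by decide) (by decide) (by decide) hspan' hai haj hbi hbj hvan with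
      ⟨α, β, hα, hβ, hWeq⟩ | ⟨α, β, hα, hβ, hWeq⟩
    · exact ⟨0, α, β, hα, hβ, by rw [hWeq]; rfl⟩
    · exact ⟨2, α, β⁻¹, hα, root_inv hβ, by rw [hWeq, stdLine_swap₂ 0 3 (show (1:Fin 4) ≠ 2 by decide) α (root_ne_zero hβ)]; rfl⟩
  · rcases classify_aux (k := 1) (l := 2) (by decide) (by decide) (by decide) (by decide)
        (by decide) (by decide) (by decide) hspan' hai haj hbi hbj hvan with
      ⟨α, β, hα, hβ, hWeq⟩ | ⟨α, β, hα, hβ, hWeq⟩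
    · exact ⟨0, α, β⁻¹, hα, root_inv hβ, by rw [hWeq, stdLine_swap₂ 0 1 (show (2:Fin 4) ≠ 3 by decide) α (root_ne_zero hβ)]; rfl⟩
    · exact ⟨1, α, β⁻¹, hα, root_inv hβ, by rw [hWeq, stdLine_swap₂ 0 2 (show (1:Fin 4) ≠ 3 by decide) α (root_ne_zero hβ)]; rfl⟩
  · rcases classify_aux (k := 2) (l := 3) (by decide) (by decide) (by decide) (by decide)
        (by decide) (by decide) (by decide) hspan' hai haj hbi hbj hvan with
      ⟨α, β, hα, hβ, hWeq⟩ | ⟨α, β, hα, hβ, hWeq⟩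
    · exact ⟨2, β, α, hβ, hα, by rw [hWeq, stdLine_comm 1 2 0 3 α β]; rfl⟩
    · exact ⟨1, β, α, hβ, hα, by rw [hWeq, stdLine_comm 1 3 0 2 α β]; rfl⟩
  · exact absurd rfl hij
  · rcases classify_aux (k := 0) (l := 3) (by decide) (by decide) (by decide) (by decide)
        (by decide) (by decide) (by decide) hspan' hai haj hbi hbj hvan with
      ⟨α, β, hα, hβ, hWeq⟩ | ⟨α, β, hα, hβ, hWeq⟩
    · exact ⟨0, α⁻¹, β, root_inv hα, hβ, by rw [hWeq, stdLine_swap₁ (show (0:Fin 4) ≠ 1 by decide) 2 3 (root_ne_zero hα) β]; rfl⟩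
    · exact ⟨1, β⁻¹, α, root_inv hβ, hα, by rw [hWeq, stdLine_comm 1 3 2 0 α β, stdLine_swap₁ (show (0:Fin 4) ≠ 2 by decide) 1 3 (root_ne_zero hβ) α]; rfl⟩
  · rcases classify_aux (k := 0) (l := 2) (by decide) (by decide) (by decide) (by decide)
        (by decide) (by decide) (by decide) hspan' hai haj hbi hbj hvan with
      ⟨α, β, hα, hβ, hWeq⟩ | ⟨α, β, hα, hβ, hWeq⟩
    · exact ⟨0, α⁻¹, β⁻¹, root_inv hα, root_inv hβ, by rw [hWeq, stdLine_swap₁ (show (0:Fin 4) ≠ 1 by decide) 3 2 (root_ne_zero hα) β, stdLine_swap₂ 0 1 (show (2:Fin 4) ≠ 3 by decide) α⁻¹ (root_ne_zero hβ)]; rfl⟩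
    · exact ⟨2, β⁻¹, α, root_inv hβ, hα, by rw [hWeq, stdLine_comm 1 2 3 0 α β, stdLine_swap₁ (show (0:Fin 4) ≠ 3 by decide) 1 2 (root_ne_zero hβ) α]; rfl⟩
  · rcases classify_aux (k := 1) (l := 3) (by decide) (by decide) (by decide) (by decide)
        (by decide) (by decide) (by decide) hspan' hai haj hbi hbj hvan with
      ⟨α, β, hα, hβ, hWeq⟩ | ⟨α, β, hα, hβ, hWeq⟩
    · exact ⟨2, β, α⁻¹, hβ, root_inv hα, by rw [hWeq, stdLine_comm 2 1 0 3 α β, stdLine_swap₂ 0 3 (show (1:Fin 4) ≠ 2 by decide) β (root_ne_zero hα)]; rfl⟩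
    · exact ⟨0, β, α, hβ, hα, by rw [hWeq, stdLine_comm 2 3 0 1 α β]; rfl⟩
  · rcases classify_aux (k := 0) (l := 3) (by decide) (by decide) (by decide) (by decide)
        (by decide) (by decide) (by decide) hspan' hai haj hbi hbj hvan with
      ⟨α, β, hα, hβ, hWeq⟩ | ⟨α, β, hα, hβ, hWeq⟩
    · exact ⟨1, α⁻¹, β, root_inv hα, hβ, by rw [hWeq, stdLine_swap₁ (show (0:Fin 4) ≠ 2 by decide) 1 3 (root_ne_zero hα) β]; rfl⟩
    · exact ⟨0, β⁻¹, α, root_inv hβ, hα, by rw [hWeq, stdLine_comm 2 3 1 0 α β, stdLine_swap₁ (show (0:Fin 4) ≠ 1 by decide) 2 3 (root_ne_zero hβ) α]; rfl⟩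
  · exact absurd rfl hij
  · rcases classify_aux (k := 0) (l := 1) (by decide) (by decide) (by decide) (by decide)
        (by decide) (by decide) (by decide) hspan' hai haj hbi hbj hvan with
      ⟨α, β, hα, hβ, hWeq⟩ | ⟨α, β, hα, hβ, hWeq⟩
    · exact ⟨1, α⁻¹, β⁻¹, root_inv hα, root_inv hβ, by rw [hWeq, stdLine_swap₁ (show (0:Fin 4) ≠ 2 by decide) 3 1 (root_ne_zero hα) β, stdLine_swap₂ 0 2 (show (1:Fin 4) ≠ 3 by decide) α⁻¹ (root_ne_zero hβ)]; rfl⟩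
    · exact ⟨2, β⁻¹, α⁻¹, root_inv hβ, root_inv hα, by rw [hWeq, stdLine_comm 2 1 3 0 α β, stdLine_swap₁ (show (0:Fin 4) ≠ 3 by decide) 2 1 (root_ne_zero hβ) α, stdLine_swap₂ 0 3 (show (1:Fin 4) ≠ 2 by decide) β⁻¹ (root_ne_zero hα)]; rfl⟩
  · rcases classify_aux (k := 1) (l := 2) (by decide) (by decide) (by decide) (by decide)
        (by decide) (by decide) (by decide) hspan' hai haj hbi hbj hvan with
      ⟨α, β, hα, hβ, hWeq⟩ | ⟨α, β, hα, hβ, hWeq⟩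
    · exact ⟨1, β, α⁻¹, hβ, root_inv hα, by rw [hWeq, stdLine_comm 3 1 0 2 α β, stdLine_swap₂ 0 2 (show (1:Fin 4) ≠ 3 by decide) β (root_ne_zero hα)]; rfl⟩
    · exact ⟨0, β, α⁻¹, hβ, root_inv hα, by rw [hWeq, stdLine_comm 3 2 0 1 α β, stdLine_swap₂ 0 1 (show (2:Fin 4) ≠ 3 by decide) β (root_ne_zero hα)]; rfl⟩
  · rcases classify_aux (k := 0) (l := 2) (by decide) (by decide) (by decide) (by decide)
        (by decide) (by decide) (by decide) hspan' hai haj hbi hbj hvan with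
      ⟨α, β, hα, hβ, hWeq⟩ | ⟨α, β, hα, hβ, hWeq⟩
    · exact ⟨2, α⁻¹, β, root_inv hα, hβ, by rw [hWeq, stdLine_swap₁ (show (0:Fin 4) ≠ 3 by decide) 1 2 (root_ne_zero hα) β]; rfl⟩
    · exact ⟨0, β⁻¹, α⁻¹, root_inv hβ, root_inv hα, by rw [hWeq, stdLine_comm 3 2 1 0 α β, stdLine_swap₁ (show (0:Fin 4) ≠ 1 by decide) 3 2 (root_ne_zero hβ) α, stdLine_swap₂ 0 1 (show (2:Fin 4) ≠ 3 by decide) β⁻¹ (root_ne_zero hα)]; rfl⟩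
  · rcases classify_aux (k := 0) (l := 1) (by decide) (by decide) (by decide) (by decide)
        (by decide) (by decide) (by decide) hspan' hai haj hbi hbj hvan with
      ⟨α, β, hα, hβ, hWeq⟩ | ⟨α, β, hα, hβ, hWeq⟩
    · exact ⟨2, α⁻¹, β⁻¹, root_inv hα, root_inv hβ, by rw [hWeq, stdLine_swap₁ (show (0:Fin 4) ≠ 3 by decide) 2 1 (root_ne_zero hα) β, stdLine_swap₂ 0 3 (show (1:Fin 4) ≠ 2 by decide) α⁻¹ (root_ne_zero hβ)]; rfl⟩
    · exact ⟨1, β⁻¹, α⁻¹, root_inv hβ, root_inv hα, by rw [hWeq, stdLine_comm 3 1 2 0 α β, stdLine_swap₁ (show (0:Fin 4) ≠ 2 by decide) 3 1 (root_ne_zero hβ) α, stdLine_swap₂ 0 2 (show (1:Fin 4) ≠ 3 by decide) β⁻¹ (root_ne_zero hα)]; rfl⟩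
  · exact absurd rfl hij

end
section
open Submodule

lemma fin3_cases (p : Fin 3) : p = 0 ∨ p = 1 ∨ p = 2 := by
  fin_cases p <;> simp

lemma mem_std_left {i j k l : Fin 4} {α β : ℂ} : v2 i j α ∈ stdLine i j k l α β :=
  subset_span (Or.inl rfl)

lemma mem_std_right {i j k l : Fin 4} {α β : ℂ} : v2 k l β ∈ stdLine i j k l α β :=
  subset_span (Or.inr rfl)

lemma ext_std {i j k l : Fin 4} {α β : ℂ} {x : Fin 4 → ℂ} (hx : x ∈ stdLine i j k l α β) :
    ∃ s t : ℂ, ∀ m, s * v2 i j α m + t * v2 k l β m = x m := by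
  obtain ⟨s, t, hst⟩ := Submodule.mem_span_pair.mp hx
  exact ⟨s, t, fun m => by have := congrFun hst m; simpa using this⟩

lemma lineOf_inj {p p' : Fin 3} {α β α' β' : ℂ} (hα : α ^ 4 = -1) (hβ : β ^ 4 = -1)
    (hα' : α' ^ 4 = -1) (hβ' : β' ^ 4 = -1)
    (h : lineOf p α β = lineOf p' α' β') : p = p' ∧ α = α' ∧ β = β' := by
  rcases fin3_cases p with rfl | rfl | rfl <;> rcases fin3_cases p' with rfl | rfl | rfl
  · refine ⟨rfl, ?_, ?_⟩
    · obtain ⟨s, t, hst⟩ := ext_std (show v2 0 1 α ∈ stdLine 0 1 2 3 α' β' by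
        rw [← lineOf_0, ← h, lineOf_0]; exact mem_std_left)
      have e0 := hst 0
      have e1 := hst 1
      simp [v2] at e0 e1
      rw [e0] at e1
      simpa using e1.symm
    · obtain ⟨s, t, hst⟩ := ext_std (show v2 2 3 β ∈ stdLine 0 1 2 3 α' β' by
        rw [← lineOf_0, ← h, lineOf_0]; exact mem_std_right)
      have e2 := hst 2
      have e3 := hst 3
      simp [v2] at e2 e3
      rw [e2] at e3
      simpa using e3.symm
  · exfalso
    obtain ⟨s, t, hst⟩ := ext_std (show v2 0 1 α ∈ stdLine 0 2 1 3 α' β' by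
      rw [← lineOf_1, ← h, lineOf_0]; exact mem_std_left)
    have e0 := hst 0
    have e2 := hst 2
    simp [v2] at e0 e2
    rw [e0] at e2
    simp at e2
    exact root_ne_zero hα' e2
  · exfalso
    obtain ⟨s, t, hst⟩ := ext_std (show v2 0 1 α ∈ stdLine 0 3 1 2 α' β' by
      rw [← lineOf_2, ← h, lineOf_0]; exact mem_std_left)
    have e0 := hst 0
    have e2 := hst 3
    simp [v2] at e0 e2
    rw [e0] at e2
    simp at e2
    exact root_ne_zero hα' e2
  · exfalso
    obtain ⟨s, t, hst⟩ := ext_std (show v2 0 2 α ∈ stdLine 0 1 2 3 α' β' by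
      rw [← lineOf_0, ← h, lineOf_1]; exact mem_std_left)
    have e0 := hst 0
    have e2 := hst 1
    simp [v2] at e0 e2
    rw [e0] at e2
    simp at e2
    exact root_ne_zero hα' e2
  · refine ⟨rfl, ?_, ?_⟩
    · obtain ⟨s, t, hst⟩ := ext_std (show v2 0 2 α ∈ stdLine 0 2 1 3 α' β' by
        rw [← lineOf_1, ← h, lineOf_1]; exact mem_std_left)
      have e0 := hst 0
      have e1 := hst 2
      simp [v2] at e0 e1
      rw [e0] at e1
      simpa using e1.symm
    · obtain ⟨s, t, hst⟩ := ext_std (show v2 1 3 β ∈ stdLine 0 2 1 3 α' β' by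
        rw [← lineOf_1, ← h, lineOf_1]; exact mem_std_right)
      have e2 := hst 1
      have e3 := hst 3
      simp [v2] at e2 e3
      rw [e2] at e3
      simpa using e3.symm
  · exfalso
    obtain ⟨s, t, hst⟩ := ext_std (show v2 0 2 α ∈ stdLine 0 3 1 2 α' β' by
      rw [← lineOf_2, ← h, lineOf_1]; exact mem_std_left)
    have e0 := hst 0
    have e2 := hst 3
    simp [v2] at e0 e2
    rw [e0] at e2
    simp at e2
    exact root_ne_zero hα' e2
  · exfalso
    obtain ⟨s, t, hst⟩ := ext_std (show v2 0 3 α ∈ stdLine 0 1 2 3 α' β' by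
      rw [← lineOf_0, ← h, lineOf_2]; exact mem_std_left)
    have e0 := hst 0
    have e2 := hst 1
    simp [v2] at e0 e2
    rw [e0] at e2
    simp at e2
    exact root_ne_zero hα' e2
  · exfalso
    obtain ⟨s, t, hst⟩ := ext_std (show v2 0 3 α ∈ stdLine 0 2 1 3 α' β' by
      rw [← lineOf_1, ← h, lineOf_2]; exact mem_std_left)
    have e0 := hst 0
    have e2 := hst 2
    simp [v2] at e0 e2
    rw [e0] at e2
    simp at e2
    exact root_ne_zero hα' e2
  · refine ⟨rfl, ?_, ?_⟩
    · obtain ⟨s, t, hst⟩ := ext_std (show v2 0 3 α ∈ stdLine 0 3 1 2 α' β' by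
        rw [← lineOf_2, ← h, lineOf_2]; exact mem_std_left)
      have e0 := hst 0
      have e1 := hst 3
      simp [v2] at e0 e1
      rw [e0] at e1
      simpa using e1.symm
    · obtain ⟨s, t, hst⟩ := ext_std (show v2 1 2 β ∈ stdLine 0 3 1 2 α' β' by
        rw [← lineOf_2, ← h, lineOf_2]; exact mem_std_right)
      have e2 := hst 1
      have e3 := hst 2
      simp [v2] at e2 e3
      rw [e2] at e3
      simpa using e3.symm

end

noncomputable def lineG : ℂ × ℂ × Fin 3 → Submodule ℂ (Fin 4 → ℂ) :=
  fun q => lineOf q.2.2 q.1 q.2.1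

/-- the Fermat quartic is smooth and contains exactly 48 lines. -/
theorem Fermat_smooth_and_48_lines :
    IsSmoothQuartic FFermat ∧ (linesOn FFermat).ncard = 48 := by
  constructor
  · exact smooth_Fermat
  · classical
    have hset : linesOn FFermat = ↑(Finset.image lineG (R4 ×ˢ R4 ×ˢ Finset.univ)) := by
      ext W
      simp only [Finset.coe_image, Set.mem_image, Finset.mem_coe, Finset.mem_product]
      constructor
      · intro hW
        obtain ⟨p, α, β, hα, hβ, rfl⟩ := classify hW
        exact ⟨(α, β, p), ⟨mem_R4.mpr hα, mem_R4.mpr hβ, Finset.mem_univ p⟩, rfl⟩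
      · rintro ⟨⟨α, β, p⟩, ⟨hα, hβ, -⟩, rfl⟩
        exact lineOf_mem (mem_R4.mp hα) (mem_R4.mp hβ)
    rw [hset, Set.ncard_coe_finset, Finset.card_image_of_injOn]
    · simp [Finset.card_product, card_R4]
    · rintro ⟨α, β, p⟩ h1 ⟨α', β', p'⟩ h2 heq
      simp only [Finset.coe_product, Set.mem_prod, Finset.mem_coe, Finset.coe_univ,
        Set.mem_univ, and_true] at h1 h2
      obtain ⟨hp, hA, hB⟩ := lineOf_inj (mem_R4.mp h1.1) (mem_R4.mp h1.2)
        (mem_R4.mp h2.1) (mem_R4.mp h2.2) heq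
      exact Prod.ext hA (Prod.ext hB hp)
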